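/- Fix n with 2 ≤ n ≤ p and let 𝔔 ⊆ 𝔓 be a subset satisfying property S(n−1) and property U(n−1). Then: (1) H_n ∉ 𝔔; (2) no P ∈ 𝔔 separates the chambers x_nC and x_n s_{i_n}C; (3) every P ∈ 𝔔 separates the chambers x₁C and x_nC. -/

import Mathlib

noncomputable section

namespace PaperBound

variable {B : Type} {W : Type} [Group W]

/-- The value `B(α_i, α_j)` of the canonical symmetric bilinear form on simple roots:
`-cos (π / m i j)` if `m i j ≠ ∞` (encoded as `M i j ≠ 0`) and `-1` otherwise. -/
def cB (M : CoxeterMatrix B) (i j : B) : ℝ :=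
  if M i j = 0 then -1 else - Real.cos (Real.pi / (M i j : ℝ))

/-- The canonical symmetric bilinear form on `V = B → ℝ` (coordinates in the basis of
simple roots `Δ = {α_i}`). -/
def bform [Fintype B] (M : CoxeterMatrix B) (u v : B → ℝ) : ℝ :=
  ∑ i, ∑ j, u i * v j * cB M i j

/-- The natural pairing `⟨-,-⟩ : V* × V → ℝ`, where both `V` and `V*` are modelled as
`B → ℝ` (coordinates of `V*` taken in the dual basis of `Δ`). -/
def pair [Fintype B] (f v : B → ℝ) : ℝ := ∑ i, f i * v i

/-- The simple root `α_i ∈ V`. -/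
def sroot [DecidableEq B] (i : B) : B → ℝ := Pi.single i 1

/-- `ρ` is the geometric representation of `W` on `V = B → ℝ`:
`s_i · v = v - 2 B(α_i, v) α_i`. -/
def IsGeomRep [Fintype B] [DecidableEq B] (M : CoxeterMatrix B) (cs : CoxeterSystem M W)
    (ρ : W →* (B → ℝ) ≃ₗ[ℝ] (B → ℝ)) : Prop :=
  ∀ (i : B) (v : B → ℝ), ρ (cs.simple i) v = v - (2 * bform M (sroot i) v) • sroot i

/-- `π` is the contragredient representation of `W` on `V* = B → ℝ`:
`⟨w·f, w·v⟩ = ⟨f, v⟩`. -/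
def IsContraRep [Fintype B] (ρ : W →* (B → ℝ) ≃ₗ[ℝ] (B → ℝ))
    (π : W →* (B → ℝ) ≃ₗ[ℝ] (B → ℝ)) : Prop :=
  ∀ (w : W) (f v : B → ℝ), pair (π w f) (ρ w v) = pair f v

/-- The set `Φ⁺` of positive roots: roots (elements of the orbit of the simple roots)
all of whose coordinates in the basis `Δ` are nonnegative. -/
def PhiPos [Fintype B] [DecidableEq B] (ρ : W →* (B → ℝ) ≃ₗ[ℝ] (B → ℝ)) : Set (B → ℝ) :=
  {α | (∃ (w : W) (i : B), α = ρ w (sroot i)) ∧ ∀ j, 0 ≤ α j}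

/-- The hyperplane `H_α = {f ∈ V* : ⟨f, α⟩ = 0}`. -/
def hyp [Fintype B] (α : B → ℝ) : Set (B → ℝ) := {f | pair f α = 0}

/-- The set `𝔓 = {H_α : α ∈ Φ⁺}` of hyperplanes. -/
def Planes [Fintype B] [DecidableEq B] (ρ : W →* (B → ℝ) ≃ₗ[ℝ] (B → ℝ)) :
    Set (Set (B → ℝ)) :=
  {H | ∃ α ∈ PhiPos (W := W) ρ, H = hyp α}

/-- The (open) dominant chamber `C = {f ∈ V* : ⟨f, α_i⟩ > 0 for all i}`. -/
def domCham (B : Type) [Fintype B] [DecidableEq B] : Set (B → ℝ) :=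
  {f | ∀ i : B, 0 < pair f (sroot i)}

/-- The Tits cone `U = ⋃_{w ∈ W} w · (closure of C)`. -/
def titsCone [Fintype B] [DecidableEq B] (π : W →* (B → ℝ) ≃ₗ[ℝ] (B → ℝ)) :
    Set (B → ℝ) :=
  ⋃ w : W, (π w) '' closure (domCham B)

/-- `A ⩀ B := A ∩ B ∩ U°`, where `U°` is the interior of the Tits cone. -/
def dcap [Fintype B] [DecidableEq B] (π : W →* (B → ℝ) ≃ₗ[ℝ] (B → ℝ))
    (A A' : Set (B → ℝ)) : Set (B → ℝ) :=
  A ∩ A' ∩ interior (titsCone π)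

/-- A set `𝔔` of hyperplanes is intersecting if `H₁ ⩀ H₂ ≠ ∅` for all `H₁, H₂ ∈ 𝔔`. -/
def Intersecting [Fintype B] [DecidableEq B] (π : W →* (B → ℝ) ≃ₗ[ℝ] (B → ℝ))
    (Q : Set (Set (B → ℝ))) : Prop :=
  ∀ H₁ ∈ Q, ∀ H₂ ∈ Q, (dcap π H₁ H₂).Nonempty

/-- The chamber `wC ⊆ V*`. -/
def cham [Fintype B] [DecidableEq B] (π : W →* (B → ℝ) ≃ₗ[ℝ] (B → ℝ)) (w : W) :
    Set (B → ℝ) :=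
  (π w) '' domCham B

/-- The hyperplane with root `α` separates `f, g ∈ V*`: `⟨f, α⟩⟨g, α⟩ < 0`. -/
def SepPt [Fintype B] (α f g : B → ℝ) : Prop := pair f α * pair g α < 0

/-- The hyperplane with root `α` separates the subsets `A, A'` of `V*`: every point of
`A ∪ A'` lies off the hyperplane, and every point of `A` is separated from every point
of `A'`. -/
def SepSets [Fintype B] (α : B → ℝ) (A A' : Set (B → ℝ)) : Prop :=
  (∀ f ∈ A ∪ A', pair f α ≠ 0) ∧ ∀ f ∈ A, ∀ g ∈ A', SepPt α f g

/-- The subset `A ⊆ V*` lies entirely on one side of the hyperplane with root `α`. -/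
def OneSide [Fintype B] (α : B → ℝ) (A : Set (B → ℝ)) : Prop :=
  (∀ f ∈ A, pair f α ≠ 0) ∧ ∀ f ∈ A, ∀ g ∈ A, ¬ SepPt α f g

/-- The hyperplane `H ∈ 𝔓` separates the subsets `A, A'` of `V*` (expressed via a
positive root `α` with `H = H_α`; this does not depend on the choice of `α`). -/
def SepSetsH [Fintype B] [DecidableEq B] (ρ : W →* (B → ℝ) ≃ₗ[ℝ] (B → ℝ))
    (H : Set (B → ℝ)) (A A' : Set (B → ℝ)) : Prop :=
  ∃ α ∈ PhiPos (W := W) ρ, H = hyp α ∧ SepSets α A A'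


/-- The open half-space bounded by the hyperplane with root `α` on the side not containing
the chamber `wC`. -/
def halfNeg [Fintype B] [DecidableEq B] (π : W →* (B → ℝ) ≃ₗ[ℝ] (B → ℝ)) (w : W)
    (α : B → ℝ) : Set (B → ℝ) :=
  {f | ∀ f₀ ∈ cham π w, pair f α * pair f₀ α < 0}

/-- Auxiliary recursion producing the sets `𝔄_i` (first component) together with the
cumulative unions `𝔄₀ ∪ ⋯ ∪ 𝔄_i` (second component), starting from `𝔄₀ = A0`:
`𝔄_{i+1} = {P ∈ Q ∖ (𝔄₀ ∪ ⋯ ∪ 𝔄_i) : P ⩀ σ(R) = ∅ for some R ∈ 𝔄_i}`. -/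
def AseqAux [Fintype B] [DecidableEq B] (π : W →* (B → ℝ) ≃ₗ[ℝ] (B → ℝ))
    (Q : Set (Set (B → ℝ))) (σ : W) (A0 : Set (Set (B → ℝ))) :
    ℕ → Set (Set (B → ℝ)) × Set (Set (B → ℝ))
  | 0 => (A0, A0)
  | i + 1 =>
    let prev := AseqAux π Q σ A0 i
    ({P | P ∈ Q ∧ P ∉ prev.2 ∧ ∃ R ∈ prev.1, dcap π P ((π σ) '' R) = ∅},
      prev.2 ∪ {P | P ∈ Q ∧ P ∉ prev.2 ∧ ∃ R ∈ prev.1, dcap π P ((π σ) '' R) = ∅})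

/-- The set `𝔄_i`. -/
def Aseq [Fintype B] [DecidableEq B] (π : W →* (B → ℝ) ≃ₗ[ℝ] (B → ℝ))
    (Q : Set (Set (B → ℝ))) (σ : W) (A0 : Set (Set (B → ℝ))) (i : ℕ) :
    Set (Set (B → ℝ)) :=
  (AseqAux π Q σ A0 i).1

section Words

variable {M : CoxeterMatrix B}

/-- The element `x′_n = x s₁ ⋯ ŝ_{i₁} ⋯ ŝ_{i_{n−1}} ⋯ s_{i_n − 1}`: the product of `x` and
the first `i_n - 1` letters of the word `ω`, with the letters at positions `i₁, …, i_{n−1}`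
omitted. (Positions are recorded `0`-based: the index `ι n : Fin ω.length` corresponds to
the letter `s_{i_{n+1}}` of the paper.) -/
def omitProd (cs : CoxeterSystem M W) (x : W) (ω : List B) {p : ℕ}
    (ι : Fin p → Fin ω.length) (n : Fin p) : W :=
  x * cs.wordProd (((List.finRange ω.length).filter
      (fun j : Fin ω.length => decide ((j : ℕ) < (ι n : ℕ) ∧ ∀ m : Fin p, m < n → j ≠ ι m))).map ω.get)

/-- The condition `ℓ(x′_n s_{i_n}) < ℓ(x′_n)` for all `n = 1, …, p`. -/
def DescCond (cs : CoxeterSystem M W) (x : W) (ω : List B) {p : ℕ}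
    (ι : Fin p → Fin ω.length) : Prop :=
  ∀ n : Fin p, cs.length (omitProd cs x ω ι n * cs.simple (ω.get (ι n))) <
    cs.length (omitProd cs x ω ι n)

/-- The element `x_n := x s₁ ⋯ s_{i_n − 1}`. -/
def xseq (cs : CoxeterSystem M W) (x : W) (ω : List B) {p : ℕ}
    (ι : Fin p → Fin ω.length) (n : Fin p) : W :=
  x * cs.wordProd (ω.take (ι n))

/-- The reflection `σ_n := x_n s_{i_n} x_n⁻¹`. -/
def sigmaseq (cs : CoxeterSystem M W) (x : W) (ω : List B) {p : ℕ}
    (ι : Fin p → Fin ω.length) (n : Fin p) : W :=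
  xseq cs x ω ι n * cs.simple (ω.get (ι n)) * (xseq cs x ω ι n)⁻¹

/-- The element `e_n := σ_n σ_{n−1} ⋯ σ₁`, with `e₀ = e`. -/
def eseq (cs : CoxeterSystem M W) (x : W) (ω : List B) {p : ℕ}
    (ι : Fin p → Fin ω.length) : ℕ → W
  | 0 => 1
  | n + 1 => (if h : n < p then sigmaseq cs x ω ι ⟨n, h⟩ else 1) * eseq cs x ω ι n

/-- A root of the hyperplane `H_n` corresponding to the reflection `σ_n`, namely
`x_n · α_{s_{i_n}}`. -/
def rootseq [Fintype B] [DecidableEq B] (cs : CoxeterSystem M W)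
    (ρ : W →* (B → ℝ) ≃ₗ[ℝ] (B → ℝ)) (x : W) (ω : List B) {p : ℕ}
    (ι : Fin p → Fin ω.length) (n : Fin p) : B → ℝ :=
  ρ (xseq cs x ω ι n) (sroot (ω.get (ι n)))

/-- The hyperplane `H_n ∈ 𝔓` corresponding to the reflection `σ_n`. -/
def Hseq [Fintype B] [DecidableEq B] (cs : CoxeterSystem M W)
    (ρ : W →* (B → ℝ) ≃ₗ[ℝ] (B → ℝ)) (x : W) (ω : List B) {p : ℕ}
    (ι : Fin p → Fin ω.length) (n : Fin p) : Set (B → ℝ) :=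
  hyp (rootseq cs ρ x ω ι n)

end Words


section Helpers
set_option linter.unusedSectionVars false
set_option linter.unusedVariables false
open CoxeterSystem

variable [Fintype B] [DecidableEq B] {M : CoxeterMatrix B}
variable {cs : CoxeterSystem M W} {ρ Rπ : W →* (B → ℝ) ≃ₗ[ℝ] (B → ℝ)}

/-- all coordinates nonneg -/
def Posv (v : B → ℝ) : Prop := ∀ a, 0 ≤ v a

def Negv (v : B → ℝ) : Prop := ∀ a, v a ≤ 0

theorem pair_comm (f v : B → ℝ) : pair f v = pair v f := by
  unfold pair; exact Finset.sum_congr rfl fun i _ => mul_comm _ _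

theorem pair_add (f u v : B → ℝ) : pair f (u + v) = pair f u + pair f v := by
  unfold pair; rw [← Finset.sum_add_distrib]
  exact Finset.sum_congr rfl fun i _ => by simp [mul_add]

theorem pair_sub (f u v : B → ℝ) : pair f (u - v) = pair f u - pair f v := by
  unfold pair; rw [← Finset.sum_sub_distrib]
  exact Finset.sum_congr rfl fun i _ => by simp [mul_sub]

theorem pair_smul (f v : B → ℝ) (c : ℝ) : pair f (c • v) = c * pair f v := by
  unfold pair; rw [Finset.mul_sum]
  exact Finset.sum_congr rfl fun i _ => by simp [Pi.smul_apply]; ring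

theorem pair_sroot (f : B → ℝ) (i : B) : pair f (sroot i) = f i := by
  unfold pair sroot
  rw [Fintype.sum_eq_single i]
  · simp
  · intro b hb; simp [Pi.single_eq_of_ne hb]

theorem pair_self_nonneg (v : B → ℝ) : 0 ≤ pair v v :=
  Finset.sum_nonneg fun i _ => mul_self_nonneg _

theorem pair_self_eq_zero {v : B → ℝ} (h : pair v v = 0) : v = 0 := by
  funext a
  have h2 : ∀ i ∈ Finset.univ, (0:ℝ) ≤ v i * v i := fun i _ => mul_self_nonneg _
  have := (Finset.sum_eq_zero_iff_of_nonneg h2).mp h a (Finset.mem_univ a)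
  simpa [mul_self_eq_zero] using this

theorem sroot_ne_zero (i : B) : sroot i ≠ 0 := by
  intro h
  have : (sroot i) i = 0 := by rw [h]; rfl
  rw [sroot, Pi.single_eq_same] at this
  exact one_ne_zero this

theorem sroot_pos (i : B) : Posv (sroot i) := by
  intro a
  rcases eq_or_ne a i with rfl | h
  · simp [sroot]
  · simp [sroot, Pi.single_eq_of_ne h]

theorem rho_mul_apply (w u : W) (v : B → ℝ) : ρ (w * u) v = ρ w (ρ u v) := by
  rw [map_mul]; rfl

theorem rho_one_apply (v : B → ℝ) : ρ (1 : W) v = v := by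
  rw [map_one]; rfl

theorem rho_inv_cancel (w : W) (v : B → ℝ) : ρ w⁻¹ (ρ w v) = v := by
  rw [← rho_mul_apply, inv_mul_cancel, rho_one_apply]

theorem rho_cancel_inv (w : W) (v : B → ℝ) : ρ w (ρ w⁻¹ v) = v := by
  rw [← rho_mul_apply, mul_inv_cancel, rho_one_apply]

theorem rho_ne_zero {w : W} {v : B → ℝ} (h : v ≠ 0) : ρ w v ≠ 0 := by
  intro h0
  apply h
  have := congrArg (ρ w⁻¹) h0
  rw [rho_inv_cancel] at this
  simpa using this

theorem rho_smul (w : W) (c : ℝ) (v : B → ℝ) : ρ w (c • v) = c • ρ w v := map_smul _ _ _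

theorem bform_sroot (i : B) (v : B → ℝ) :
    bform M (sroot i) v = ∑ b, v b * cB M i b := by
  unfold bform
  rw [Fintype.sum_eq_single i]
  · exact Finset.sum_congr rfl fun b _ => by rw [sroot, Pi.single_eq_same, one_mul]
  · intro a ha
    apply Finset.sum_eq_zero
    intro b _
    rw [sroot, Pi.single_eq_of_ne ha, zero_mul, zero_mul]

theorem cB_diag (i : B) : cB M i i = 1 := by
  unfold cB
  rw [M.diagonal i]
  norm_num

theorem cB_symm (i j : B) : cB M i j = cB M j i := by
  unfold cB; rw [M.symmetric i j]

theorem bform_sroot_sroot (i j : B) : bform M (sroot i) (sroot j) = cB M i j := by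
  rw [bform_sroot]
  rw [Fintype.sum_eq_single j]
  · rw [sroot, Pi.single_eq_same, one_mul]
  · intro b hb; rw [sroot, Pi.single_eq_of_ne hb, zero_mul]

/-- Chebyshev-like sequence `S k = sin(kθ)/sin θ`. -/
def Sseq (c : ℝ) : ℕ → ℝ
  | 0 => 0
  | 1 => 1
  | (k+2) => 2 * c * Sseq c (k+1) - Sseq c k

theorem Sseq_zero (c : ℝ) : Sseq c 0 = 0 := rfl

theorem Sseq_one (c : ℝ) : Sseq c 1 = 1 := rfl

theorem Sseq_two (c : ℝ) (k : ℕ) : Sseq c (k+2) = 2 * c * Sseq c (k+1) - Sseq c k := rfl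

theorem Sseq_linear (k : ℕ) : Sseq 1 k = k := by
  induction k using Nat.strong_induction_on with
  | _ k ih =>
    match k with
    | 0 => norm_num [Sseq_zero]
    | 1 => norm_num [Sseq_one]
    | (k+2) =>
      rw [Sseq_two, ih (k+1) (by omega), ih k (by omega)]
      push_cast
      ring

theorem Sseq_sin {m : ℕ} (hm : 2 ≤ m) (k : ℕ) :
    Sseq (Real.cos (Real.pi / m)) k
      = Real.sin (k * (Real.pi / m)) / Real.sin (Real.pi / m) := by
  have hmpos : (0:ℝ) < m := by exact_mod_cast (show 0 < m by omega)
  have hθpos : 0 < Real.pi / m := div_pos Real.pi_pos hmpos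
  have hθlt : Real.pi / m < Real.pi := by
    rw [div_lt_iff₀ hmpos]
    nth_rewrite 1 [← mul_one Real.pi]
    apply mul_lt_mul_of_pos_left _ Real.pi_pos
    exact_mod_cast hm
  have hsin : 0 < Real.sin (Real.pi / m) := Real.sin_pos_of_pos_of_lt_pi hθpos hθlt
  have hsin' : Real.sin (Real.pi / m) ≠ 0 := ne_of_gt hsin
  set θ := Real.pi / m with hθ
  induction k using Nat.strong_induction_on with
  | _ k ih =>
    match k with
    | 0 => norm_num [Sseq_zero]
    | 1 => rw [Sseq_one]; push_cast; rw [one_mul, div_self hsin']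
    | (k+2) =>
      have key : Real.sin (((k:ℝ)+2) * θ) =
          2 * Real.cos θ * Real.sin (((k:ℝ)+1)*θ) - Real.sin ((k:ℝ) * θ) := by
        have h1 : ((k:ℝ)+2) * θ = ((k:ℝ)+1) * θ + θ := by ring
        have h2 : (k:ℝ) * θ = ((k:ℝ)+1) * θ - θ := by ring
        rw [h1, h2, Real.sin_add, Real.sin_sub]; ring
      rw [Sseq_two, ih (k+1) (by omega), ih k (by omega)]
      push_cast
      rw [key]
      field_simp

theorem Sseq_sin_nonneg {m k : ℕ} (hm : 2 ≤ m) (hk : k ≤ m) :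
    0 ≤ Sseq (Real.cos (Real.pi / m)) k := by
  rw [Sseq_sin hm k]
  have hmpos : (0:ℝ) < m := by exact_mod_cast (show 0 < m by omega)
  have hθpos : 0 < Real.pi / m := div_pos Real.pi_pos hmpos
  have hθlt : Real.pi / m < Real.pi := by
    rw [div_lt_iff₀ hmpos]
    nth_rewrite 1 [← mul_one Real.pi]
    apply mul_lt_mul_of_pos_left _ Real.pi_pos
    exact_mod_cast hm
  apply div_nonneg
  · apply Real.sin_nonneg_of_nonneg_of_le_pi
    · positivity
    · calc (k:ℝ) * (Real.pi / m) ≤ m * (Real.pi / m) := by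
            apply mul_le_mul_of_nonneg_right _ (le_of_lt hθpos)
            exact_mod_cast hk
        _ = Real.pi := by field_simp
  · exact le_of_lt (Real.sin_pos_of_pos_of_lt_pi hθpos hθlt)

theorem cB_cases {i j : B} (hij : i ≠ j) :
    (M i j = 0 ∧ -(cB M i j) = 1) ∨
      (2 ≤ M i j ∧ -(cB M i j) = Real.cos (Real.pi / (M i j : ℕ))) := by
  by_cases h : M i j = 0
  · left
    constructor
    · exact h
    · unfold cB; rw [if_pos h]; norm_num
  · right
    have h1 : M i j ≠ 1 := M.off_diagonal i j hij
    constructor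
    · omega
    · unfold cB; rw [if_neg h]; ring

theorem cB_c_nonneg {i j : B} (hij : i ≠ j) : 0 ≤ -(cB M i j) := by
  rcases cB_cases (M := M) hij with ⟨_, h⟩ | ⟨hm, h⟩
  · rw [h]; norm_num
  · rw [h]
    apply Real.cos_nonneg_of_mem_Icc
    constructor
    · have : 0 < Real.pi / (M i j : ℕ) := by
        apply div_pos Real.pi_pos
        exact_mod_cast (show 0 < M i j by omega)
      linarith [Real.pi_pos]
    · rw [div_le_div_iff₀ (by exact_mod_cast (show 0 < M i j by omega)) (by norm_num : (0:ℝ) < 2)]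
      have : (2:ℝ) ≤ (M i j : ℕ) := by exact_mod_cast hm
      nlinarith [Real.pi_pos]

theorem Sseq_nonneg {i j : B} (hij : i ≠ j) {k : ℕ}
    (hk : M i j = 0 ∨ k ≤ M i j) : 0 ≤ Sseq (-(cB M i j)) k := by
  rcases cB_cases (M := M) hij with ⟨h0, h⟩ | ⟨hm, h⟩
  · rw [h, Sseq_linear]; positivity
  · rcases hk with h0 | hk
    · omega
    · rw [h]; exact Sseq_sin_nonneg hm hk

theorem bform_sroot_combo {i j : B} (hij : i ≠ j) (a b : ℝ) :
    bform M (sroot i) (a • sroot i + b • sroot j) = a + b * cB M i j := by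
  rw [bform_sroot]
  have : ∀ b' : B, (a • sroot i + b • sroot j) b' * cB M i b'
      = a * (sroot i b' * cB M i b') + b * (sroot j b' * cB M i b') := by
    intro b'; simp [Pi.add_apply, Pi.smul_apply]; ring
  rw [Finset.sum_congr rfl (fun b' _ => this b')]
  rw [Finset.sum_add_distrib, ← Finset.mul_sum, ← Finset.mul_sum]
  have h1 : ∑ b', sroot i b' * cB M i b' = cB M i i := by
    rw [Fintype.sum_eq_single i]
    · rw [sroot, Pi.single_eq_same, one_mul]
    · intro x hx; rw [sroot, Pi.single_eq_of_ne hx, zero_mul]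
  have h2 : ∑ b', sroot j b' * cB M i b' = cB M i j := by
    rw [Fintype.sum_eq_single j]
    · rw [sroot, Pi.single_eq_same, one_mul]
    · intro x hx; rw [sroot, Pi.single_eq_of_ne hx, zero_mul]
  rw [h1, h2, cB_diag, mul_one]

theorem isRoot_rho {v : B → ℝ} (u : W) (h : ∃ w k, v = ρ w (sroot k)) :
    ∃ w k, ρ u v = ρ w (sroot k) := by
  obtain ⟨w, k, rfl⟩ := h
  exact ⟨u * w, k, (rho_mul_apply u w _).symm⟩

theorem isRoot_ne_zero {v : B → ℝ} (h : ∃ w k, v = ρ w (sroot k)) : v ≠ 0 := by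
  obtain ⟨w, k, rfl⟩ := h
  exact rho_ne_zero (sroot_ne_zero k)

theorem posv_nonneg_pair {f v : B → ℝ} (hf : ∀ a, 0 < f a) (hv : Posv v) (hne : v ≠ 0) :
    0 < pair f v := by
  have hex : ∃ a, v a ≠ 0 := by
    by_contra hc
    push_neg at hc
    exact hne (funext fun a => hc a)
  obtain ⟨a, ha⟩ := hex
  apply Finset.sum_pos'
  · intro b _
    exact mul_nonneg (le_of_lt (hf b)) (hv b)
  · exact ⟨a, Finset.mem_univ a, mul_pos (hf a) (lt_of_le_of_ne (hv a) (Ne.symm ha))⟩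

theorem pair_neg (f v : B → ℝ) : pair f (-v) = - pair f v := by
  unfold pair
  rw [← Finset.sum_neg_distrib]
  exact Finset.sum_congr rfl fun i _ => by simp [Pi.neg_apply]

theorem negv_neg_pair {f v : B → ℝ} (hf : ∀ a, 0 < f a) (hv : Negv v) (hne : v ≠ 0) :
    pair f v < 0 := by
  have h : 0 < pair f (-v) := by
    apply posv_nonneg_pair hf
    · intro a; simpa using hv a
    · simpa using hne
  rw [pair_neg] at h
  linarith

theorem ones_mem_domCham : (fun _ => (1:ℝ)) ∈ domCham B := by
  intro i
  rw [pair_sroot]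
  norm_num

theorem mem_domCham_pos {f : B → ℝ} (hf : f ∈ domCham B) (a : B) : 0 < f a := by
  have := hf a
  rwa [pair_sroot] at this

theorem cham_nonempty (u : W) : (Rπ u) (fun _ => (1:ℝ)) ∈ cham Rπ u :=
  Set.mem_image_of_mem _ ones_mem_domCham

variable (hπ : IsContraRep ρ Rπ)
include hπ

theorem pair_cham (w : W) (f v : B → ℝ) : pair (Rπ w f) v = pair f (ρ w⁻¹ v) := by
  have := hπ w f (ρ w⁻¹ v)
  rwa [rho_cancel_inv] at this


/-- Sign of the pairing on a chamber, positive case. -/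
theorem cham_pair_pos {α : B → ℝ} (hroot : ∃ w k, α = ρ w (sroot k)) {u : W}
    (hpos : Posv (ρ u⁻¹ α)) {f : B → ℝ} (hf : f ∈ cham Rπ u) : 0 < pair f α := by
  obtain ⟨f₀, hf₀, rfl⟩ := hf
  rw [pair_cham hπ]
  exact posv_nonneg_pair (mem_domCham_pos hf₀) hpos (isRoot_ne_zero (isRoot_rho u⁻¹ hroot))


/-- Sign of the pairing on a chamber, negative case. -/
theorem cham_pair_neg {α : B → ℝ} (hroot : ∃ w k, α = ρ w (sroot k)) {u : W}
    (hneg : Negv (ρ u⁻¹ α)) {f : B → ℝ} (hf : f ∈ cham Rπ u) : pair f α < 0 := by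
  obtain ⟨f₀, hf₀, rfl⟩ := hf
  rw [pair_cham hπ]
  exact negv_neg_pair (mem_domCham_pos hf₀) hneg (isRoot_ne_zero (isRoot_rho u⁻¹ hroot))

omit hπ
variable (hρ : IsGeomRep M cs ρ)
include hρ

theorem rho_simple_sroot_self (i : B) : ρ (cs.simple i) (sroot i) = - sroot i := by
  rw [hρ i (sroot i), bform_sroot_sroot, cB_diag]
  funext a
  simp [Pi.single_apply]
  ring_nf

theorem rho_simple_coord_ne {i a : B} (h : a ≠ i) (v : B → ℝ) :
    (ρ (cs.simple i) v) a = v a := by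
  rw [hρ i v]
  simp [sroot, Pi.single_eq_of_ne h]

theorem rho_simple_combo_i {i j : B} (hij : i ≠ j) (a b : ℝ) :
    ρ (cs.simple i) (a • sroot i + b • sroot j)
      = (2 * (-(cB M i j)) * b - a) • sroot i + b • sroot j := by
  rw [hρ, bform_sroot_combo hij]
  funext x
  simp only [Pi.add_apply, Pi.sub_apply, Pi.smul_apply, smul_eq_mul]
  ring

theorem rho_simple_combo_j {i j : B} (hij : i ≠ j) (a b : ℝ) :
    ρ (cs.simple j) (a • sroot i + b • sroot j)
      = a • sroot i + (2 * (-(cB M i j)) * a - b) • sroot j := by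
  have hji : j ≠ i := hij.symm
  have hcomm : a • sroot i + b • sroot j = b • sroot j + a • sroot i := add_comm _ _
  rw [hρ, hcomm, bform_sroot_combo hji b a]
  have hsymm : cB M j i = cB M i j := cB_symm j i
  funext x
  simp only [Pi.add_apply, Pi.sub_apply, Pi.smul_apply, smul_eq_mul, hsymm]
  ring


/-- Explicit action of alternating word products on `α_i`. -/
theorem rho_alt {i j : B} (hij : i ≠ j) (r : ℕ) :
    ρ (cs.wordProd (CoxeterSystem.alternatingWord i j r)) (sroot i)
      = (if Even r then Sseq (-(cB M i j)) (r+1) else Sseq (-(cB M i j)) r) • sroot i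
        + (if Even r then Sseq (-(cB M i j)) r else Sseq (-(cB M i j)) (r+1)) • sroot j := by
  set c := -(cB M i j) with hc
  induction r with
  | zero =>
    simp only [CoxeterSystem.alternatingWord, CoxeterSystem.wordProd_nil, rho_one_apply]
    norm_num [Sseq_zero, Sseq_one]
  | succ r ih =>
    rw [CoxeterSystem.alternatingWord_succ', CoxeterSystem.wordProd_cons, rho_mul_apply, ih]
    by_cases hr : Even r
    · rw [if_pos hr, if_pos hr, if_pos hr]
      have : ¬ Even (r+1) := by simp [Nat.even_add_one, hr]
      rw [if_neg this, if_neg this]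
      rw [rho_simple_combo_j hρ hij]
      congr 2
    · rw [if_neg hr, if_neg hr, if_neg hr]
      have : Even (r+1) := by simpa [Nat.even_add_one] using hr
      rw [if_pos this, if_pos this]
      rw [rho_simple_combo_i hρ hij]
      congr 2


/-- The fundamental positivity theorem of the geometric representation:
if `ℓ(w sᵢ) > ℓ(w)` then `ρ(w)(αᵢ)` is a nonnegative vector. -/
theorem pos_of_not_descent :
    ∀ (N : ℕ) (w : W) (i : B), cs.length w = N → ¬ cs.IsRightDescent w i →
      Posv (ρ w (sroot i)) := by
  intro N
  induction N using Nat.strong_induction_on with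
  | _ N IH =>
    -- the alternating chain lemma
    have chain : ∀ (L : ℕ) (u : W) (i j : B) (r : ℕ), cs.length u = L → i ≠ j →
        cs.length u + r = N → 1 ≤ r → (M i j = 0 ∨ r ≤ M i j) →
        cs.length (u * cs.wordProd (alternatingWord i j r)) = N →
        ¬ cs.IsRightDescent u (if Even r then i else j) →
        ¬ cs.IsRightDescent (u * cs.wordProd (alternatingWord i j r)) i →
        Posv (ρ (u * cs.wordProd (alternatingWord i j r)) (sroot i)) := by
      intro L
      induction L using Nat.strong_induction_on with
      | _ L IHc =>
        intro u i j r hL hij hlu hr1 hrm hlw hprev hnd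
        -- case r = M i j (braid relation gives a contradiction)
        by_cases hbraid : M i j ≠ 0 ∧ r = M i j
        · exfalso
          obtain ⟨hm0, rfl⟩ := hbraid
          have hsucc : M j i = (M j i - 1) + 1 := by rw [M.symmetric j i]; omega
          have halt : cs.wordProd (alternatingWord i j (M i j)) * cs.simple i
              = cs.wordProd (alternatingWord i j (M i j - 1)) := by
            have h1 : cs.wordProd (alternatingWord i j (M i j))
                = cs.wordProd (alternatingWord j i (M j i)) := cs.wordProd_braidWord_eq i j
            have h2 : alternatingWord j i (M j i)
                = (alternatingWord i j (M j i - 1)).concat i := by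
              nth_rewrite 1 [hsucc]
              rw [alternatingWord_succ]
            rw [h1, h2, cs.wordProd_concat, M.symmetric j i]
            rw [mul_assoc, cs.simple_mul_simple_self, mul_one]
          have hle : cs.length (u * cs.wordProd (alternatingWord i j (M i j)) * cs.simple i)
              ≤ L + (M i j - 1) := by
            rw [mul_assoc, halt, ← hL]
            calc cs.length (u * cs.wordProd (alternatingWord i j (M i j - 1)))
                ≤ cs.length u + cs.length (cs.wordProd (alternatingWord i j (M i j - 1))) :=
                  cs.length_mul_le _ _
              _ ≤ cs.length u + (M i j - 1) := by
                  have := cs.length_wordProd_le (alternatingWord i j (M i j - 1))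
                  rw [length_alternatingWord] at this
                  omega
          rw [cs.not_isRightDescent_iff] at hnd
          omega
        -- now r < M i j (or M i j = 0)
        have hrlt : M i j = 0 ∨ r < M i j := by
          rcases hrm with h | h
          · exact Or.inl h
          · rcases eq_or_ne (M i j) 0 with h0 | h0
            · exact Or.inl h0
            · right
              rcases eq_or_ne r (M i j) with rfl | hne
              · exact absurd ⟨h0, rfl⟩ hbraid
              · omega
        have hrm' : M i j = 0 ∨ r + 1 ≤ M i j := hrlt.imp (fun h => h) (fun h => h)
        by_cases hstop : cs.IsRightDescent u (if Even r then j else i)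
        · -- continue the chain with u' = u * sₑ
          have hu'len : cs.length (u * cs.simple (if Even r then j else i)) + 1 = cs.length u :=
            (cs.isRightDescent_iff).mp hstop
          have hword : (u * cs.simple (if Even r then j else i))
                * cs.wordProd (alternatingWord i j (r+1))
              = u * cs.wordProd (alternatingWord i j r) := by
            rw [alternatingWord_succ', cs.wordProd_cons]
            rw [mul_assoc, ← mul_assoc (cs.simple _), cs.simple_mul_simple_self, one_mul]
          have hinv : (if Even (r+1) then i else j) = (if Even r then j else i) := by
            by_cases hpar : Even r
            · have h2 : ¬ Even (r+1) := by rw [Nat.even_add_one]; exact not_not_intro hpar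
              rw [if_neg h2, if_pos hpar]
            · have h2 : Even (r+1) := (Nat.even_add_one).mpr hpar
              rw [if_pos h2, if_neg hpar]
          have hres := IHc (cs.length (u * cs.simple (if Even r then j else i))) (by omega)
            (u * cs.simple (if Even r then j else i)) i j (r+1)
            rfl hij (by omega) (by omega) hrm'
            (by rw [hword]; exact hlw)
            (by
              rw [hinv]
              exact (cs.isRightDescent_iff_not_isRightDescent_mul).mp hstop)
            (by rw [hword]; exact hnd)
          rw [hword] at hres
          exact hres
        · -- stop: both non-descents at u; use the explicit formula
          have hndui : ¬ cs.IsRightDescent u i := by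
            by_cases hpar : Even r
            · rw [if_pos hpar] at hprev; exact hprev
            · rw [if_neg hpar] at hstop; exact hstop
          have hnduj : ¬ cs.IsRightDescent u j := by
            by_cases hpar : Even r
            · rw [if_pos hpar] at hstop; exact hstop
            · rw [if_neg hpar] at hprev; exact hprev
          have hui : Posv (ρ u (sroot i)) := IH (cs.length u) (by omega) u i rfl hndui
          have huj : Posv (ρ u (sroot j)) := IH (cs.length u) (by omega) u j rfl hnduj
          have hS1 : 0 ≤ Sseq (-(cB M i j)) r :=
            Sseq_nonneg hij (hrlt.imp (fun h => h) (fun h => by omega))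
          have hS2 : 0 ≤ Sseq (-(cB M i j)) (r+1) :=
            Sseq_nonneg hij (hrlt.imp (fun h => h) (fun h => by omega))
          rw [rho_mul_apply, rho_alt hρ hij r, map_add, rho_smul, rho_smul]
          intro a
          simp only [Pi.add_apply, Pi.smul_apply, smul_eq_mul]
          by_cases hpar : Even r
          · rw [if_pos hpar, if_pos hpar]
            have := hui a; have := huj a
            positivity
          · rw [if_neg hpar, if_neg hpar]
            have := hui a; have := huj a
            positivity
    -- main argument
    intro w i hN hnd
    rcases eq_or_ne w 1 with rfl | hw1
    · rw [rho_one_apply]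
      exact sroot_pos i
    · obtain ⟨j, hdesc⟩ := cs.exists_rightDescent_of_ne_one hw1
      have hij : i ≠ j := by rintro rfl; exact hnd hdesc
      have hlen : cs.length (w * cs.simple j) + 1 = cs.length w := (cs.isRightDescent_iff).mp hdesc
      have hword : (w * cs.simple j) * cs.wordProd (alternatingWord i j 1) = w := by
        have h1 : alternatingWord i j 1 = [j] := rfl
        rw [h1, cs.wordProd_singleton, mul_assoc, cs.simple_mul_simple_self, mul_one]
      have hres := chain (cs.length (w * cs.simple j)) (w * cs.simple j) i j 1 rfl hij
        (by omega) (le_refl 1)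
        (by
          rcases eq_or_ne (M i j) 0 with h0 | h0
          · exact Or.inl h0
          · right; omega)
        (by rw [hword]; exact hN)
        (by
          have h1 : (if Even 1 then i else j) = j := by norm_num
          rw [h1]
          exact (cs.isRightDescent_iff_not_isRightDescent_mul).mp hdesc)
        (by rw [hword]; exact hnd)
      rw [hword] at hres
      exact hres

theorem neg_of_descent {w : W} {i : B} (h : cs.IsRightDescent w i) :
    Negv (ρ w (sroot i)) := by
  have h2 : ¬ cs.IsRightDescent (w * cs.simple i) i :=
    (cs.isRightDescent_iff_not_isRightDescent_mul).mp h
  have h3 : Posv (ρ (w * cs.simple i) (sroot i)) :=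
    pos_of_not_descent hρ _ _ _ rfl h2
  have h4 : w = (w * cs.simple i) * cs.simple i := by
    rw [mul_assoc, cs.simple_mul_simple_self, mul_one]
  intro a
  rw [h4, rho_mul_apply, rho_simple_sroot_self hρ, map_neg]
  simpa using h3 a

theorem isRoot_neg {v : B → ℝ} (h : ∃ w k, v = ρ w (sroot k)) :
    ∃ w k, -v = ρ w (sroot k) := by
  obtain ⟨w, k, rfl⟩ := h
  refine ⟨w * cs.simple k, k, ?_⟩
  rw [rho_mul_apply, rho_simple_sroot_self hρ, map_neg]

theorem root_dichotomy {v : B → ℝ} (h : ∃ w k, v = ρ w (sroot k)) :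
    Posv v ∨ Negv v := by
  obtain ⟨w, k, rfl⟩ := h
  by_cases hd : cs.IsRightDescent w k
  · exact Or.inr (neg_of_descent hρ hd)
  · exact Or.inl (pos_of_not_descent hρ _ _ _ rfl hd)

/-- If a positive root stops being positive after applying a simple reflection,
it is a positive multiple of the corresponding simple root. -/
theorem simple_flip {δ : B → ℝ} (hroot : ∃ w k, δ = ρ w (sroot k)) (hpos : Posv δ) {i : B}
    (hneg : ¬ Posv (ρ (cs.simple i) δ)) : ∃ c : ℝ, 0 < c ∧ δ = c • sroot i := by
  have hd : Negv (ρ (cs.simple i) δ) :=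
    (root_dichotomy hρ (isRoot_rho _ hroot)).resolve_left hneg
  have hzero : ∀ a, a ≠ i → δ a = 0 := by
    intro a ha
    have h1 := hd a
    rw [rho_simple_coord_ne hρ ha] at h1
    exact le_antisymm h1 (hpos a)
  have hform : δ = δ i • sroot i := by
    funext a
    rcases eq_or_ne a i with rfl | ha
    · simp [sroot, Pi.single_eq_same]
    · rw [hzero a ha]
      simp [sroot, Pi.single_eq_of_ne ha]
  refine ⟨δ i, ?_, hform⟩
  rcases lt_or_eq_of_le (hpos i) with h | h
  · exact h
  · exfalso
    apply isRoot_ne_zero hroot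
    rw [hform, ← h, zero_smul]

/-- Scanning lemma: if a positive root is flipped to negative by `(π l)⁻¹`, the flip
happens at a specific prefix. -/
theorem scan_flip : ∀ (l : List B) (δ : B → ℝ), (∃ w k, δ = ρ w (sroot k)) → Posv δ →
    ¬ Posv (ρ (cs.wordProd l)⁻¹ δ) →
    ∃ (t : ℕ) (ht : t < l.length) (c : ℝ), 0 < c ∧
      ρ (cs.wordProd (l.take t))⁻¹ δ = c • sroot (l.get ⟨t, ht⟩) := by
  intro l
  induction l using List.reverseRecOn with
  | nil =>
    intro δ hroot hpos hneg
    exfalso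
    apply hneg
    rw [CoxeterSystem.wordProd_nil, inv_one, rho_one_apply]
    exact hpos
  | append_singleton l' a IH =>
    intro δ hroot hpos hneg
    have hsplit : ρ (cs.wordProd (l' ++ [a]))⁻¹ δ
        = ρ (cs.simple a) (ρ (cs.wordProd l')⁻¹ δ) := by
      rw [cs.wordProd_append, cs.wordProd_singleton, mul_inv_rev, cs.inv_simple, rho_mul_apply]
    by_cases hP2 : Posv (ρ (cs.wordProd l')⁻¹ δ)
    · rw [hsplit] at hneg
      obtain ⟨c, hc, hform⟩ := simple_flip hρ (isRoot_rho _ hroot) hP2 hneg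
      refine ⟨l'.length, by simp, c, hc, ?_⟩
      have h1 : (l' ++ [a]).take l'.length = l' := List.take_left
      have h2 : (l' ++ [a]).get ⟨l'.length, by simp⟩ = a := by
        simp [List.getElem_concat_length]
      rw [h1, h2]
      exact hform
    · obtain ⟨t, ht, c, hc, hform⟩ := IH δ hroot hpos hP2
      refine ⟨t, by simp; omega, c, hc, ?_⟩
      have h1 : (l' ++ [a]).take t = l'.take t := List.take_append_of_le_length (by omega)
      have h2 : (l' ++ [a]).get ⟨t, by simp; omega⟩ = l'.get ⟨t, ht⟩ := by
        simp [List.getElem_append_left ht]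
      rw [h1, h2]
      exact hform

include hπ

/-- Separation of chambers forces opposite signs of pulled-back roots. -/
theorem sep_to_sign {α : B → ℝ} (hroot : ∃ w k, α = ρ w (sroot k)) {u v : W}
    (hsep : SepSets α (cham Rπ u) (cham Rπ v)) :
    (Posv (ρ u⁻¹ α) ↔ ¬ Posv (ρ v⁻¹ α)) := by
  have hfu := cham_nonempty (Rπ := Rπ) u
  have hfv := cham_nonempty (Rπ := Rπ) v
  have hpt := hsep.2 _ hfu _ hfv
  unfold SepPt at hpt
  constructor
  · intro hu hv
    have h1 := cham_pair_pos hπ hroot hu hfu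
    have h2 := cham_pair_pos hπ hroot hv hfv
    nlinarith
  · intro hv
    rcases root_dichotomy hρ (isRoot_rho u⁻¹ hroot) with h | h
    · exact h
    · exfalso
      have h1 := cham_pair_neg hπ hroot h hfu
      rcases root_dichotomy hρ (isRoot_rho v⁻¹ hroot) with h' | h'
      · exact hv h'
      · have h2 := cham_pair_neg hπ hroot h' hfv
        nlinarith


/-- Opposite signs of pulled-back roots give separation of chambers. -/
theorem sign_to_sep {α : B → ℝ} (hroot : ∃ w k, α = ρ w (sroot k)) {u v : W}
    (hsign : Posv (ρ u⁻¹ α) ↔ ¬ Posv (ρ v⁻¹ α)) :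
    SepSets α (cham Rπ u) (cham Rπ v) := by
  constructor
  · rintro f (hf | hf)
    · rcases root_dichotomy hρ (isRoot_rho u⁻¹ hroot) with h | h
      · exact ne_of_gt (cham_pair_pos hπ hroot h hf)
      · exact ne_of_lt (cham_pair_neg hπ hroot h hf)
    · rcases root_dichotomy hρ (isRoot_rho v⁻¹ hroot) with h | h
      · exact ne_of_gt (cham_pair_pos hπ hroot h hf)
      · exact ne_of_lt (cham_pair_neg hπ hroot h hf)
  · intro f hf g hg
    unfold SepPt
    by_cases hu : Posv (ρ u⁻¹ α)
    · have hv : ¬ Posv (ρ v⁻¹ α) := hsign.mp hu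
      have hvneg : Negv (ρ v⁻¹ α) := (root_dichotomy hρ (isRoot_rho v⁻¹ hroot)).resolve_left hv
      exact mul_neg_of_pos_of_neg (cham_pair_pos hπ hroot hu hf)
        (cham_pair_neg hπ hroot hvneg hg)
    · have huneg : Negv (ρ u⁻¹ α) := (root_dichotomy hρ (isRoot_rho u⁻¹ hroot)).resolve_left hu
      have hv : Posv (ρ v⁻¹ α) := by
        by_contra hc
        exact hu (hsign.mpr hc)
      exact mul_neg_of_neg_of_pos (cham_pair_neg hπ hroot huneg hf)
        (cham_pair_pos hπ hroot hv hg)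

end Helpers


section HelpersB
set_option linter.unusedSectionVars false
set_option linter.unusedVariables false
open CoxeterSystem

variable [Fintype B] [DecidableEq B] {M : CoxeterMatrix B}
variable {cs : CoxeterSystem M W} {ρ Rπ : W →* (B → ℝ) ≃ₗ[ℝ] (B → ℝ)}

theorem posv_smul_iff {P : B → ℝ} (hP : Posv P) (hPne : P ≠ 0) {c : ℝ} (hc : c ≠ 0) :
    Posv (c • P) ↔ 0 < c := by
  have hex : ∃ a, 0 < P a := by
    by_contra hcon
    push_neg at hcon
    exact hPne (funext fun a => le_antisymm (hcon a) (hP a))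
  obtain ⟨a, ha⟩ := hex
  constructor
  · intro h
    have := h a
    rw [Pi.smul_apply, smul_eq_mul] at this
    rcases lt_trichotomy c 0 with h' | h' | h'
    · nlinarith
    · exact absurd h' hc
    · exact h'
  · intro h b
    rw [Pi.smul_apply, smul_eq_mul]
    exact mul_nonneg (le_of_lt h) (hP b)

theorem not_posv_neg {v : B → ℝ} (hroot : ∃ w k, v = ρ w (sroot k)) (hpos : Posv v) :
    ¬ Posv (-v) := by
  intro h
  apply isRoot_ne_zero hroot
  funext a
  have h1 := h a
  have h2 := hpos a
  rw [Pi.neg_apply] at h1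
  have : v a = 0 := by linarith
  simpa using this

theorem hyp_smul {β : B → ℝ} {c : ℝ} (hc : c ≠ 0) : hyp (c • β) = hyp β := by
  ext f
  simp only [hyp, Set.mem_setOf_eq, pair_smul]
  constructor
  · intro h
    rcases mul_eq_zero.mp h with h | h
    · exact absurd h hc
    · exact h
  · intro h
    rw [h, mul_zero]

theorem hyp_collinear {α β : B → ℝ} (hα : α ≠ 0) (hβ : β ≠ 0) (h : hyp α = hyp β) :
    ∃ c : ℝ, c ≠ 0 ∧ α = c • β := by
  have hββ : pair β β ≠ 0 := fun hz => hβ (pair_self_eq_zero hz)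
  set t := pair α β / pair β β with ht
  set g : B → ℝ := α - t • β with hg
  have hgβ : pair g β = 0 := by
    rw [hg]
    have h1 : pair (α - t • β) β = pair β (α - t • β) := pair_comm _ _
    rw [h1, pair_sub, pair_smul, ← pair_comm α β, ← pair_comm β β, ht]
    field_simp
    ring
  have hgmem : g ∈ hyp β := hgβ
  have hgα : pair g α = 0 := by
    have : g ∈ hyp α := h.symm ▸ hgmem
    exact this
  have hgg : pair g g = 0 := by
    have hα_eq : α = g + t • β := by rw [hg]; abel
    have := hgα
    rw [hα_eq, pair_add, pair_smul] at this
    have h2 : pair g β = 0 := hgβ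
    rw [h2, mul_zero, add_zero] at this
    exact this
  have hgzero : g = 0 := pair_self_eq_zero hgg
  have hαt : α = t • β := by
    have : α - t • β = 0 := hgzero
    linear_combination (norm := abel) this
  refine ⟨t, ?_, hαt⟩
  intro h0
  apply hα
  rw [hαt, h0, zero_smul]

theorem wordProd_take_split (ω : List B) {a b : ℕ} (hab : a ≤ b) :
    cs.wordProd (ω.take b) = cs.wordProd (ω.take a) * cs.wordProd ((ω.take b).drop a) := by
  have h1 : (ω.take b).take a = ω.take a := by
    rw [List.take_take, min_eq_left hab]
  rw [← cs.wordProd_append, ← h1, List.take_append_drop]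

variable (hρ : IsGeomRep M cs ρ)
include hρ

/-- The root of a letter of a reduced word, pushed by the preceding segment, is positive. -/
theorem seg_root_pos {ω : List B} (hred : cs.IsReduced ω) {a q : ℕ} (haq : a ≤ q)
    (hq : q < ω.length) :
    Posv (ρ (cs.wordProd ((ω.take q).drop a)) (sroot (ω.get ⟨q, hq⟩))) := by
  have hl : cs.IsReduced ((ω.take (q+1)).drop a) :=
    CoxeterSystem.IsReduced.drop (CoxeterSystem.IsReduced.take hred (q+1)) a
  have hsplit : (ω.take (q+1)).drop a = (ω.take q).drop a ++ [ω.get ⟨q, hq⟩] := by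
    have h1 : ω.take (q+1) = (ω.take q).concat ω[q] := (List.take_concat_get hq).symm
    rw [h1, List.concat_eq_append, List.drop_append_of_le_length]
    · rfl
    · rw [List.length_take]
      omega
  have hlen : ((ω.take q).drop a).length = q - a := by
    rw [List.length_drop, List.length_take]
    omega
  have hflen : ((ω.take (q+1)).drop a).length = q + 1 - a := by
    rw [List.length_drop, List.length_take]
    omega
  have hprod : cs.wordProd ((ω.take (q+1)).drop a)
      = cs.wordProd ((ω.take q).drop a) * cs.simple (ω.get ⟨q, hq⟩) := by
    rw [hsplit, cs.wordProd_append, cs.wordProd_singleton]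
  have hnd : ¬ cs.IsRightDescent (cs.wordProd ((ω.take q).drop a)) (ω.get ⟨q, hq⟩) := by
    intro hd
    unfold CoxeterSystem.IsRightDescent at hd
    rw [← hprod] at hd
    have h2 : cs.length (cs.wordProd ((ω.take (q+1)).drop a)) = q + 1 - a := by
      rw [hl, hflen]
    have h3 : cs.length (cs.wordProd ((ω.take q).drop a)) ≤ q - a := by
      have := cs.length_wordProd_le ((ω.take q).drop a)
      rwa [hlen] at this
    omega
  exact pos_of_not_descent hρ _ _ _ rfl hnd

end HelpersB

/-- for `2 ≤ n ≤ p` and `𝔔 ⊆ 𝔓` satisfying `S(n−1)` and `U(n−1)`: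
(1) `H_n ∉ 𝔔`; (2) no `P ∈ 𝔔` separates `x_nC` and `x_n s_{i_n} C`;
(3) every `P ∈ 𝔔` separates `x₁C` and `x_nC`. -/
theorem statement15 [Fintype B] [DecidableEq B] {M : CoxeterMatrix B}
    (cs : CoxeterSystem M W) (ρ π : W →* (B → ℝ) ≃ₗ[ℝ] (B → ℝ))
    (hρ : IsGeomRep M cs ρ) (hπ : IsContraRep ρ π)
    (x y : W) (ω : List B) (hred : cs.IsReduced ω) (hy : cs.wordProd ω = y)
    (p : ℕ) (ι : Fin p → Fin ω.length) (hι : StrictMono ι)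
    (hdesc : DescCond cs x ω ι)
    (n : ℕ) (hn2 : 2 ≤ n) (hnp : n ≤ p)
    (Q : Set (Set (B → ℝ))) (hQP : Q ⊆ Planes ρ)
    (hS : ∀ P ∈ Q, SepSetsH ρ P (cham π (xseq cs x ω ι ⟨0, by omega⟩))
      (cham π (xseq cs x ω ι ⟨n - 2, by omega⟩ *
        cs.simple (ω.get (ι ⟨n - 2, by omega⟩)))))
    (hU : ∀ P ∈ Q, ¬ SepSetsH ρ P (cham π (xseq cs x ω ι ⟨0, by omega⟩))
      (cham π (eseq cs x ω ι (n - 1)))) :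
    Hseq cs ρ x ω ι ⟨n - 1, by omega⟩ ∉ Q ∧
    (∀ P ∈ Q, ¬ SepSetsH ρ P (cham π (xseq cs x ω ι ⟨n - 1, by omega⟩))
      (cham π (xseq cs x ω ι ⟨n - 1, by omega⟩ *
        cs.simple (ω.get (ι ⟨n - 1, by omega⟩))))) ∧
    (∀ P ∈ Q, SepSetsH ρ P (cham π (xseq cs x ω ι ⟨0, by omega⟩))
      (cham π (xseq cs x ω ι ⟨n - 1, by omega⟩))) := by
  classical
  set n0 : Fin p := ⟨0, by omega⟩ with hn0def
  set n2 : Fin p := ⟨n - 2, by omega⟩ with hn2def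
  set n1 : Fin p := ⟨n - 1, by omega⟩ with hn1def
  have h21 : (ι n2 : ℕ) < (ι n1 : ℕ) := hι (show n2 < n1 by rw [hn2def, hn1def, Fin.lt_def]; simp; omega)
  have h02 : (ι n0 : ℕ) ≤ (ι n2 : ℕ) := hι.monotone (show n0 ≤ n2 by rw [hn0def, hn2def, Fin.le_def]; simp)
  have hlt1 : ((ι n1 : ℕ)) < ω.length := (ι n1).isLt
  -- inverse of prefix times longer prefix is the segment in between
  have hinvseg : ∀ a b : ℕ, a ≤ b →
      (x * cs.wordProd (ω.take a))⁻¹ * (x * cs.wordProd (ω.take b))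
        = cs.wordProd ((ω.take b).drop a) := by
    intro a b hab
    rw [wordProd_take_split (cs := cs) ω hab]
    group
  -- sign of a scaled prefix root pulled back by a shorter prefix
  have sgn : ∀ (a b : ℕ), a ≤ b → ∀ hb : b < ω.length, ∀ c : ℝ, c ≠ 0 →
      ∀ α : B → ℝ, α = c • ρ (x * cs.wordProd (ω.take b)) (sroot (ω.get ⟨b, hb⟩)) →
      (Posv (ρ (x * cs.wordProd (ω.take a))⁻¹ α) ↔ 0 < c) := by
    intro a b hab hb c hc α hα
    have h1 : ρ (x * cs.wordProd (ω.take a))⁻¹ α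
        = c • ρ (cs.wordProd ((ω.take b).drop a)) (sroot (ω.get ⟨b, hb⟩)) := by
      rw [hα, rho_smul, ← rho_mul_apply, hinvseg a b hab]
    rw [h1]
    exact posv_smul_iff (seg_root_pos hρ hred hab hb)
      (isRoot_ne_zero ⟨_, _, rfl⟩) hc
  -- the chamber of `x_{n-1} s` is the chamber of the prefix of length i2+1
  have hD : xseq cs x ω ι n2 * cs.simple (ω.get (ι n2))
      = x * cs.wordProd (ω.take ((ι n2 : ℕ) + 1)) := by
    show x * cs.wordProd (ω.take ((ι n2 : ℕ))) * cs.simple (ω.get (ι n2)) = _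
    rw [mul_assoc]
    congr 1
    rw [← cs.wordProd_singleton (ω.get (ι n2)), ← cs.wordProd_append]
    congr 1
    rw [List.get_eq_getElem, ← List.concat_eq_append]
    exact List.take_concat_get (ι n2).isLt
  have hβroot : ∃ w k, rootseq cs ρ x ω ι n1 = ρ w (sroot k) := ⟨_, _, rfl⟩
  have hβprefix : rootseq cs ρ x ω ι n1
      = (1:ℝ) • ρ (x * cs.wordProd (ω.take (ι n1 : ℕ)))
          (sroot (ω.get ⟨(ι n1 : ℕ), hlt1⟩)) := by
    rw [one_smul]; rfl
  -- PART 1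
  have part1 : Hseq cs ρ x ω ι n1 ∉ Q := by
    intro hmem
    obtain ⟨α, hαPhi, hPeq, hsep⟩ := hS _ hmem
    have hαroot := hαPhi.1
    obtain ⟨c, hc, hαc⟩ : ∃ c : ℝ, c ≠ 0 ∧ α = c • rootseq cs ρ x ω ι n1 := by
      apply hyp_collinear (isRoot_ne_zero hαroot) (isRoot_ne_zero hβroot)
      exact hPeq.symm
    have hαc' : α = c • ρ (x * cs.wordProd (ω.take (ι n1 : ℕ)))
        (sroot (ω.get ⟨(ι n1 : ℕ), hlt1⟩)) := hαc
    have hxor := sep_to_sign (hρ := hρ) (hπ := hπ) hαroot hsep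
    have hA : Posv (ρ (xseq cs x ω ι n0)⁻¹ α) ↔ 0 < c :=
      sgn (ι n0) (ι n1) (le_trans h02 (le_of_lt h21)) hlt1 c hc α hαc'
    have hB : Posv (ρ (xseq cs x ω ι n2 * cs.simple (ω.get (ι n2)))⁻¹ α) ↔ 0 < c := by
      rw [hD]
      exact sgn ((ι n2 : ℕ) + 1) (ι n1) h21 hlt1 c hc α hαc'
    exact iff_not_self (hA.symm.trans (hxor.trans (not_congr hB)))
  -- PART 3
  have part3 : ∀ P ∈ Q, SepSetsH ρ P (cham π (xseq cs x ω ι n0)) (cham π (xseq cs x ω ι n1)) := by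
    intro P hPQ
    obtain ⟨α, hαPhi, hPeq, hsepSD⟩ := hS P hPQ
    have hαroot := hαPhi.1
    refine ⟨α, hαPhi, hPeq, ?_⟩
    have hxor := sep_to_sign (hρ := hρ) (hπ := hπ) hαroot hsepSD
    have hxn_decomp : xseq cs x ω ι n1
        = (xseq cs x ω ι n2 * cs.simple (ω.get (ι n2)))
          * cs.wordProd ((ω.take (ι n1 : ℕ)).drop ((ι n2 : ℕ) + 1)) := by
      rw [hD]
      show x * cs.wordProd (ω.take ((ι n1 : ℕ))) = _
      rw [wordProd_take_split (cs := cs) ω (show (ι n2 : ℕ) + 1 ≤ (ι n1 : ℕ) by omega), mul_assoc]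
    have hxnδ : ρ (xseq cs x ω ι n1)⁻¹ α
        = ρ (cs.wordProd ((ω.take (ι n1 : ℕ)).drop ((ι n2 : ℕ) + 1)))⁻¹
            (ρ (xseq cs x ω ι n2 * cs.simple (ω.get (ι n2)))⁻¹ α) := by
      rw [hxn_decomp, mul_inv_rev, rho_mul_apply]
    have hDX : Posv (ρ (xseq cs x ω ι n2 * cs.simple (ω.get (ι n2)))⁻¹ α)
        ↔ Posv (ρ (xseq cs x ω ι n1)⁻¹ α) := by
      by_contra hne
      have hδroot : ∃ w k, ρ (xseq cs x ω ι n2 * cs.simple (ω.get (ι n2)))⁻¹ α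
          = ρ w (sroot k) := isRoot_rho _ hαroot
      have huni : ∃ (t : ℕ) (ht : t < ((ω.take (ι n1 : ℕ)).drop ((ι n2 : ℕ) + 1)).length)
          (c' : ℝ), c' ≠ 0 ∧
          ρ (cs.wordProd (((ω.take (ι n1 : ℕ)).drop ((ι n2 : ℕ) + 1)).take t))⁻¹
              (ρ (xseq cs x ω ι n2 * cs.simple (ω.get (ι n2)))⁻¹ α)
            = c' • sroot (((ω.take (ι n1 : ℕ)).drop ((ι n2 : ℕ) + 1)).get ⟨t, ht⟩) := by
        by_cases hp : Posv (ρ (xseq cs x ω ι n2 * cs.simple (ω.get (ι n2)))⁻¹ α)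
        · have hneg : ¬ Posv (ρ (cs.wordProd ((ω.take (ι n1 : ℕ)).drop ((ι n2 : ℕ) + 1)))⁻¹
              (ρ (xseq cs x ω ι n2 * cs.simple (ω.get (ι n2)))⁻¹ α)) := by
            intro hcon
            apply hne
            rw [hxnδ]
            exact iff_of_true hp hcon
          obtain ⟨t, ht, c', hc', heq⟩ := scan_flip hρ _ _ hδroot hp hneg
          exact ⟨t, ht, c', ne_of_gt hc', heq⟩
        · have hposimg : Posv (ρ (cs.wordProd ((ω.take (ι n1 : ℕ)).drop ((ι n2 : ℕ) + 1)))⁻¹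
              (ρ (xseq cs x ω ι n2 * cs.simple (ω.get (ι n2)))⁻¹ α)) := by
            by_contra hcon
            apply hne
            rw [hxnδ]
            exact iff_of_false hp hcon
          have hnegv : Negv (ρ (xseq cs x ω ι n2 * cs.simple (ω.get (ι n2)))⁻¹ α) :=
            (root_dichotomy hρ hδroot).resolve_left hp
          have hδ'root := isRoot_neg hρ hδroot
          have hδ'pos : Posv (-(ρ (xseq cs x ω ι n2 * cs.simple (ω.get (ι n2)))⁻¹ α)) :=
            fun a => by simpa using hnegv a
          have himgroot : ∃ w k, ρ (cs.wordProd ((ω.take (ι n1 : ℕ)).drop ((ι n2 : ℕ) + 1)))⁻¹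
              (ρ (xseq cs x ω ι n2 * cs.simple (ω.get (ι n2)))⁻¹ α) = ρ w (sroot k) :=
            isRoot_rho _ hδroot
          have hneg' : ¬ Posv (ρ (cs.wordProd ((ω.take (ι n1 : ℕ)).drop ((ι n2 : ℕ) + 1)))⁻¹
              (-(ρ (xseq cs x ω ι n2 * cs.simple (ω.get (ι n2)))⁻¹ α))) := by
            rw [map_neg]
            exact not_posv_neg himgroot hposimg
          obtain ⟨t, ht, c', hc', heq⟩ := scan_flip hρ _ _ hδ'root hδ'pos hneg'
          refine ⟨t, ht, -c', by simpa using ne_of_gt hc', ?_⟩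
          rw [map_neg] at heq
          have h2 := congrArg Neg.neg heq
          rw [neg_neg] at h2
          rw [h2, neg_smul]
      obtain ⟨t, ht, c', hc', heq⟩ := huni
      have hll : ((ω.take (ι n1 : ℕ)).drop ((ι n2 : ℕ) + 1)).length
          = (ι n1 : ℕ) - ((ι n2 : ℕ) + 1) := by
        rw [List.length_drop, List.length_take]
        omega
      have htb : t < (ι n1 : ℕ) - ((ι n2 : ℕ) + 1) := by rw [hll] at ht; exact ht
      have hqlen : (ι n2 : ℕ) + 1 + t < ω.length := by omega
      have hlget : ((ω.take (ι n1 : ℕ)).drop ((ι n2 : ℕ) + 1)).get ⟨t, ht⟩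
          = ω.get ⟨(ι n2 : ℕ) + 1 + t, hqlen⟩ := by
        simp only [List.get_eq_getElem]
        rw [List.getElem_drop, List.getElem_take]
      have htake : (((ω.take (ι n1 : ℕ)).drop ((ι n2 : ℕ) + 1)).take t)
          = (ω.drop ((ι n2 : ℕ) + 1)).take t := by
        rw [List.drop_take, List.take_take]
        congr 1
        omega
      have hltake : cs.wordProd (ω.take ((ι n2 : ℕ) + 1))
            * cs.wordProd (((ω.take (ι n1 : ℕ)).drop ((ι n2 : ℕ) + 1)).take t)
          = cs.wordProd (ω.take ((ι n2 : ℕ) + 1 + t)) := by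
        rw [htake, ← cs.wordProd_append, ← List.take_add]
      have hαq : α = c' • ρ (x * cs.wordProd (ω.take ((ι n2 : ℕ) + 1 + t)))
          (sroot (ω.get ⟨(ι n2 : ℕ) + 1 + t, hqlen⟩)) := by
        have hδeq : ρ (xseq cs x ω ι n2 * cs.simple (ω.get (ι n2)))⁻¹ α
            = c' • ρ (cs.wordProd (((ω.take (ι n1 : ℕ)).drop ((ι n2 : ℕ) + 1)).take t))
                (sroot (((ω.take (ι n1 : ℕ)).drop ((ι n2 : ℕ) + 1)).get ⟨t, ht⟩)) := by
          have h3 : ρ (cs.wordProd (((ω.take (ι n1 : ℕ)).drop ((ι n2 : ℕ) + 1)).take t))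
                (ρ (cs.wordProd (((ω.take (ι n1 : ℕ)).drop ((ι n2 : ℕ) + 1)).take t))⁻¹
                  (ρ (xseq cs x ω ι n2 * cs.simple (ω.get (ι n2)))⁻¹ α))
              = ρ (cs.wordProd (((ω.take (ι n1 : ℕ)).drop ((ι n2 : ℕ) + 1)).take t))
                (c' • sroot (((ω.take (ι n1 : ℕ)).drop ((ι n2 : ℕ) + 1)).get ⟨t, ht⟩)) :=
            congrArg _ heq
          rw [rho_cancel_inv, rho_smul] at h3
          exact h3
        have hα2 : α = ρ (xseq cs x ω ι n2 * cs.simple (ω.get (ι n2)))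
            (ρ (xseq cs x ω ι n2 * cs.simple (ω.get (ι n2)))⁻¹ α) := (rho_cancel_inv _ _).symm
        rw [hα2, hδeq, rho_smul, ← rho_mul_apply, hlget]
        congr 2
        rw [hD, mul_assoc, hltake]
      have hs1 : Posv (ρ (xseq cs x ω ι n0)⁻¹ α) ↔ 0 < c' :=
        sgn (ι n0) ((ι n2 : ℕ) + 1 + t) (by omega) hqlen c' hc' α hαq
      have hs2 : Posv (ρ (xseq cs x ω ι n2 * cs.simple (ω.get (ι n2)))⁻¹ α) ↔ 0 < c' := by
        rw [hD]
        exact sgn ((ι n2 : ℕ) + 1) ((ι n2 : ℕ) + 1 + t) (by omega) hqlen c' hc' α hαq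
      exact iff_not_self (hs1.symm.trans (hxor.trans (not_congr hs2)))
    apply sign_to_sep (hρ := hρ) (hπ := hπ) hαroot
    exact hxor.trans (not_congr hDX)
  -- PART 2
  have part2 : ∀ P ∈ Q, ¬ SepSetsH ρ P (cham π (xseq cs x ω ι n1))
      (cham π (xseq cs x ω ι n1 * cs.simple (ω.get (ι n1)))) := by
    intro P hPQ hcon
    obtain ⟨γ, hγPhi, hPγ, hsep2⟩ := hcon
    have hγroot := hγPhi.1
    have hδroot : ∃ w k, ρ (xseq cs x ω ι n1)⁻¹ γ = ρ w (sroot k) := isRoot_rho _ hγroot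
    have hflip : ρ (xseq cs x ω ι n1 * cs.simple (ω.get (ι n1)))⁻¹ γ
        = ρ (cs.simple (ω.get (ι n1))) (ρ (xseq cs x ω ι n1)⁻¹ γ) := by
      rw [mul_inv_rev, cs.inv_simple, rho_mul_apply]
    have hxor2 : Posv (ρ (xseq cs x ω ι n1)⁻¹ γ)
        ↔ ¬ Posv (ρ (cs.simple (ω.get (ι n1))) (ρ (xseq cs x ω ι n1)⁻¹ γ)) := by
      rw [← hflip]
      exact sep_to_sign (hρ := hρ) (hπ := hπ) hγroot hsep2
    have huni : ∃ c' : ℝ, c' ≠ 0 ∧ ρ (xseq cs x ω ι n1)⁻¹ γ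
        = c' • sroot (ω.get (ι n1)) := by
      by_cases hp : Posv (ρ (xseq cs x ω ι n1)⁻¹ γ)
      · obtain ⟨c', hc', heq⟩ := simple_flip hρ hδroot hp (hxor2.mp hp)
        exact ⟨c', ne_of_gt hc', heq⟩
      · have hposimg : Posv (ρ (cs.simple (ω.get (ι n1))) (ρ (xseq cs x ω ι n1)⁻¹ γ)) := by
          by_contra hcon2
          exact hp (hxor2.mpr hcon2)
        have hnegv : Negv (ρ (xseq cs x ω ι n1)⁻¹ γ) :=
          (root_dichotomy hρ hδroot).resolve_left hp
        have hδ'root := isRoot_neg hρ hδroot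
        have hδ'pos : Posv (-(ρ (xseq cs x ω ι n1)⁻¹ γ)) := fun a => by simpa using hnegv a
        have himgroot : ∃ w k, ρ (cs.simple (ω.get (ι n1))) (ρ (xseq cs x ω ι n1)⁻¹ γ)
            = ρ w (sroot k) := isRoot_rho _ hδroot
        have hneg' : ¬ Posv (ρ (cs.simple (ω.get (ι n1))) (-(ρ (xseq cs x ω ι n1)⁻¹ γ))) := by
          rw [map_neg]
          exact not_posv_neg himgroot hposimg
        obtain ⟨c', hc', heq⟩ := simple_flip hρ hδ'root hδ'pos hneg'
        refine ⟨-c', by simpa using ne_of_gt hc', ?_⟩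
        have h2 := congrArg Neg.neg heq
        rw [neg_neg] at h2
        rw [h2, neg_smul]
    obtain ⟨c', hc', hδc⟩ := huni
    have hγc : γ = c' • rootseq cs ρ x ω ι n1 := by
      have h4 : γ = ρ (xseq cs x ω ι n1) (ρ (xseq cs x ω ι n1)⁻¹ γ) := (rho_cancel_inv _ _).symm
      rw [h4, hδc, rho_smul]
      rfl
    have hPH : P = Hseq cs ρ x ω ι n1 := by
      rw [hPγ, hγc]
      exact hyp_smul hc'
    exact part1 (hPH ▸ hPQ)
  exact ⟨part1, part2, part3⟩


end PaperBound
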